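/- arXiv:2003.12014 — 3 statements merged into one kernel-verified Lean document; each statement's English description precedes it below -/
import Mathlib

section
/- If X_G is a finitary coarse space and the dynamical system (G, X*) is topologically transitive (some orbit Gp is dense in X*), then X_G is λ-tight. -/
open Set

/-- A coarse structure on a set `X`. -/
structure CoarseStructure (X : Type*) where
  sets : Set (Set (X × X))
  diagonal_mem : ∀ E ∈ sets, ∀ x : X, (x, x) ∈ E
  comp_mem : ∀ E ∈ sets, ∀ E' ∈ sets,
    {q : X × X | ∃ z : X, (q.1, z) ∈ E ∧ (z, q.2) ∈ E'} ∈ sets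
  inv_mem : ∀ E ∈ sets, {q : X × X | (q.2, q.1) ∈ E} ∈ sets
  subset_mem : ∀ E ∈ sets, ∀ E', E' ⊆ E → (∀ x : X, (x, x) ∈ E') → E' ∈ sets
  covers : ⋃₀ sets = Set.univ

/-- The ball `E[A]`. -/
def ball {X : Type*} (E : Set (X × X)) (A : Set X) : Set X := {y | ∃ a ∈ A, (a, y) ∈ E}

/-- A bounded subset of a coarse space. -/
def CoarseStructure.Bounded {X : Type*} (C : CoarseStructure X) (B : Set X) : Prop :=
  ∃ E ∈ C.sets, ∃ x : X, B ⊆ ball E {x}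

/-- A finitary coarse space: uniformly finite balls. -/
def CoarseStructure.Finitary {X : Type*} (C : CoarseStructure X) : Prop :=
  ∀ E ∈ C.sets, ∃ n : ℕ, ∀ x : X, (ball E {x}).Finite ∧ (ball E {x}).ncard < n

/-- The set `X^♯` of ultrafilters all of whose members are unbounded. -/
def CoarseStructure.Sharp {X : Type*} (C : CoarseStructure X) : Set (Ultrafilter X) :=
  {p | ∀ P ∈ p, ¬ C.Bounded P}

/-- The parallelity relation on ultrafilters. -/
def CoarseStructure.Parallel {X : Type*} (C : CoarseStructure X) (p q : Ultrafilter X) : Prop :=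
  ∃ E ∈ C.sets, ∀ P ∈ p, ball E P ∈ q

/-- The entourage determined by a set of permutations. -/
def entourage {X : Type*} (F : Set (Equiv.Perm X)) : Set (X × X) :=
  {q | ∃ g ∈ F, q.2 = g q.1}

/-- The finitary coarse structure `X_G` determined by a group `G` of permutations of `X`:
its entourages are the diagonal-containing subsets of `{(x,gx) : x ∈ X, g ∈ F}`
for finite `F ⊆ G` with `id ∈ F`. -/
def XGsets {X : Type*} (G : Subgroup (Equiv.Perm X)) : Set (Set (X × X)) :=
  {E | (∀ x : X, (x, x) ∈ E) ∧ ∃ F : Finset (Equiv.Perm X),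
    (1 : Equiv.Perm X) ∈ F ∧ ↑F ⊆ (G : Set (Equiv.Perm X)) ∧ E ⊆ entourage ↑F}

/-- A free ultrafilter. -/
def IsFree {X : Type*} (p : Ultrafilter X) : Prop := (p : Filter X) ≤ Filter.cofinite

/-- `X*`, the space of free ultrafilters with the Stone topology. -/
def FreeUF (X : Type*) : Type _ := {p : Ultrafilter X // IsFree p}

instance (X : Type*) : TopologicalSpace (FreeUF X) :=
  instTopologicalSpaceSubtype

/-- The orbit `Gp` of an ultrafilter under the induced action `gp = {gP : P ∈ p}`. -/
def ufOrbit {X : Type*} (G : Subgroup (Equiv.Perm X)) (p : Ultrafilter X) :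
    Set (Ultrafilter X) :=
  {q | ∃ g ∈ G, q = Ultrafilter.map (⇑g) p}

/-- The `p`-companion `Δ_p(A) = A* ∩ Gp`. -/
def compan {X : Type*} (G : Subgroup (Equiv.Perm X)) (p : Ultrafilter X) (A : Set X) :
    Set (Ultrafilter X) :=
  {q | A ∈ q ∧ q ∈ ufOrbit G p}

/-- Large subsets of `X_G`. -/
def IsLarge {X : Type*} (G : Subgroup (Equiv.Perm X)) (A : Set X) : Prop :=
  ∃ E ∈ XGsets G, ball E A = Set.univ

/-- Thick subsets of `X_G`. -/
def IsThick {X : Type*} (G : Subgroup (Equiv.Perm X)) (A : Set X) : Prop :=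
  ∀ E ∈ XGsets G, ∃ a ∈ A, ball E {a} ⊆ A

/-- Thin (discrete) subsets of `X_G`. -/
def IsThin {X : Type*} (G : Subgroup (Equiv.Perm X)) (A : Set X) : Prop :=
  ∀ E ∈ XGsets G, ∃ B : Set X, B.Finite ∧ ∀ a ∈ A \ B, ball E {a} ∩ A = {a}

/-- Sparse subsets of `X_G`. -/
def IsSparse {X : Type*} (G : Subgroup (Equiv.Perm X)) (A : Set X) : Prop :=
  ∀ p : Ultrafilter X, IsFree p → (compan G p A).Finite

/-- Scattered subsets of `X_G`. -/
def IsScattered {X : Type*} (G : Subgroup (Equiv.Perm X)) (A : Set X) : Prop :=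
  ∀ Y ⊆ A, Y.Infinite →
    ∃ p : Ultrafilter X, IsFree p ∧ Y ∈ p ∧ (compan G p Y).Finite

/-- Close subsets of a coarse space. -/
def CoarseStructure.Close {X : Type*} (C : CoarseStructure X) (A B : Set X) : Prop :=
  ∃ E ∈ C.sets, A ⊆ ball E B ∧ B ⊆ ball E A

/-- Close subsets of `X_G`. -/
def CloseG {X : Type*} (G : Subgroup (Equiv.Perm X)) (A B : Set X) : Prop :=
  ∃ E ∈ XGsets G, A ⊆ ball E B ∧ B ⊆ ball E A

/-- Linked subsets of `X_G`. -/
def LinkedG {X : Type*} (G : Subgroup (Equiv.Perm X)) (A B : Set X) : Prop :=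
  (A.Finite ∧ B.Finite) ∨
    ∃ A' ⊆ A, ∃ B' ⊆ B, A'.Infinite ∧ B'.Infinite ∧ CloseG G A' B'


open Set

/-- The `n`-th block `{g_0^{ε_0} ⋯ g_n^{ε_n} x_n : ε_i ∈ {0,1}}`. -/
def pwBlock {X : Type*} (g : ℕ → Equiv.Perm X) (x : ℕ → X) (n : ℕ) : Set X :=
  {y | ∃ ε : Fin (n + 1) → Bool,
    y = ((List.ofFn fun i : Fin (n + 1) =>
      (g i) ^ (if ε i then 1 else 0)).prod : Equiv.Perm X) (x n)}

/-- A piece-wise shifted FP-set determined by the group `G`. -/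
def IsPWShiftedFP {X : Type*} (G : Subgroup (Equiv.Perm X)) (Y : Set X) : Prop :=
  ∃ g : ℕ → Equiv.Perm X, ∃ x : ℕ → X,
    (∀ n, g n ∈ G) ∧
    (∀ m n, m ≠ n → Disjoint (pwBlock g x m) (pwBlock g x n)) ∧
    (∀ n, (pwBlock g x n).ncard = 2 ^ (n + 1)) ∧
    Y = ⋃ n, pwBlock g x n

/-- The group of all self-homeomorphisms of a topological space, as a subgroup
of the permutation group. -/
def homeoSubgroup (X : Type*) [TopologicalSpace X] : Subgroup (Equiv.Perm X) where
  carrier := {g | Continuous g ∧ Continuous g.symm}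
  one_mem' := ⟨continuous_id, continuous_id⟩
  mul_mem' := by
    rintro a b ⟨ha1, ha2⟩ ⟨hb1, hb2⟩
    refine ⟨?_, ?_⟩
    · simpa [Equiv.Perm.mul_def, Equiv.coe_trans] using ha1.comp hb1
    · simpa [Equiv.Perm.mul_def, Equiv.symm_trans_apply] using (hb2.comp ha2 : _)
  inv_mem' := by
    rintro a ⟨ha1, ha2⟩
    exact ⟨ha2, ha1⟩


/-- The parallelity relation on ultrafilters over the coarse space `X_G`. -/
def ParallelG {X : Type*} (G : Subgroup (Equiv.Perm X)) (p q : Ultrafilter X) : Prop :=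
  ∃ E ∈ XGsets G, ∀ P ∈ p, ball E P ∈ q

/-- Linked subsets of a coarse space. -/
def CoarseStructure.Linked {X : Type*} (C : CoarseStructure X) (A B : Set X) : Prop :=
  (C.Bounded A ∧ C.Bounded B) ∨
    ∃ A' ⊆ A, ∃ B' ⊆ B, ¬ C.Bounded A' ∧ ¬ C.Bounded B' ∧ C.Close A' B'

/-- The orbit `Gp` viewed as a subset of the space `X*` of free ultrafilters. -/
def freeOrbit {X : Type*} (G : Subgroup (Equiv.Perm X)) (p : Ultrafilter X) :
    Set (FreeUF X) :=
  {q | q.1 ∈ ufOrbit G p}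

lemma exists_freeUF_mem' {X : Type*} (A : Set X) (hA : A.Infinite) :
    ∃ p : Ultrafilter X, IsFree p ∧ A ∈ p := by
  have := hA.cofinite_inf_principal_neBot
  obtain ⟨p, hp⟩ := Ultrafilter.exists_le (Filter.cofinite ⊓ Filter.principal A)
  refine ⟨p, le_trans hp inf_le_left, ?_⟩
  exact (le_trans hp inf_le_right) (Filter.mem_principal_self A)

lemma mem_infinite_of_free' {X : Type*} {p : Ultrafilter X} (hp : IsFree p)
    {C : Set X} (hC : C ∈ p) : C.Infinite := by
  intro hfin
  have : Cᶜ ∈ p := hp hfin.compl_mem_cofinite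
  exact absurd (p.toFilter.inter_sets hC this) (by simp)

/-- If `(G, X*)` is topologically transitive (some orbit is dense in
`X*`) then `X_G` is λ-tight: any two infinite subsets `A, B` of `X` are linked. -/
theorem lambdaTight_of_topTransitive {X : Type*} [Infinite X]
    (G : Subgroup (Equiv.Perm X)) (h : ∃ p : FreeUF X, Dense (freeOrbit G p.1)) :
    ∀ A B : Set X, A.Infinite → B.Infinite →
      ∃ A' ⊆ A, ∃ B' ⊆ B, A'.Infinite ∧ B'.Infinite ∧
        ∃ F : Finset (Equiv.Perm X), ↑F ⊆ (G : Set (Equiv.Perm X)) ∧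
          A' ⊆ {x : X | ∃ g ∈ F, ∃ b ∈ B', x = g b} := by
  obtain ⟨p, hdense⟩ := h
  intro A B hA hB
  -- find orbit points in the basic open sets determined by A and B
  have key : ∀ S : Set X, S.Infinite → ∃ g : Equiv.Perm X, g ∈ G ∧ (⇑g) ⁻¹' S ∈ p.1 := by
    intro S hS
    obtain ⟨u, hu_free, hu_mem⟩ := exists_freeUF_mem' S hS
    have hopen : IsOpen ((fun q : FreeUF X => q.1) ⁻¹' {u : Ultrafilter X | S ∈ u}) :=
      (ultrafilter_isOpen_basic S).preimage continuous_subtype_val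
    have hne : ((fun q : FreeUF X => q.1) ⁻¹' {u : Ultrafilter X | S ∈ u}).Nonempty :=
      ⟨⟨u, hu_free⟩, hu_mem⟩
    obtain ⟨q, hq_orb, hq_mem⟩ := hdense.exists_mem_open hopen hne
    obtain ⟨g, hgG, hq_eq⟩ := hq_orb
    refine ⟨g, hgG, ?_⟩
    have : S ∈ Ultrafilter.map (⇑g) p.1 := by rw [← hq_eq]; exact hq_mem
    exact this
  obtain ⟨g, hgG, hgA⟩ := key A hA
  obtain ⟨hg, hhG, hhB⟩ := key B hB
  set C : Set X := (⇑g) ⁻¹' A ∩ (⇑hg) ⁻¹' B with hCdef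
  have hC : C ∈ p.1 := p.1.toFilter.inter_sets hgA hhB
  have hCinf : C.Infinite := mem_infinite_of_free' p.2 hC
  refine ⟨(⇑g) '' C, ?_, (⇑hg) '' C, ?_, hCinf.image (g.injective.injOn), hCinf.image (hg.injective.injOn), {g * hg⁻¹}, ?_, ?_⟩
  · rintro _ ⟨c, hc, rfl⟩; exact hc.1
  · rintro _ ⟨c, hc, rfl⟩; exact hc.2
  · intro x hx
    simp only [Finset.coe_singleton, Set.mem_singleton_iff] at hx
    subst hx
    exact mul_mem hgG (inv_mem hhG)
  · rintro _ ⟨c, hc, rfl⟩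
    refine ⟨g * hg⁻¹, Finset.mem_singleton_self _, hg c, ⟨c, hc, rfl⟩, ?_⟩
    simp [Equiv.Perm.mul_apply]
end

section
/- Let K be a closed nowhere dense subset of ω*. Then there exists a transitive group G of permutations of ω such that every ultrafilter q ∈ K is fixed by every g ∈ G (so Gq = {q}), while for every p ∈ ω* \ K the orbit Gp is dense in ω*. -/
open Set

open Set

namespace KPaux

lemma mem_free_infinite {p : Ultrafilter ℕ} (hp : (p : Filter ℕ) ≤ Filter.cofinite)
    {A : Set ℕ} (hA : A ∈ p) : A.Infinite := by
  intro hfin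
  have h1 : Aᶜ ∈ Filter.cofinite := by rw [Filter.mem_cofinite, compl_compl]; exact hfin
  have h2 : Aᶜ ∈ p := hp h1
  exact (Ultrafilter.compl_mem_iff_notMem.mp h2) hA

lemma exists_split {A : Set ℕ} (hA : A.Infinite) :
    ∃ B ⊆ A, B.Infinite ∧ (A \ B).Infinite := by
  set F : ℕ → ℕ := fun n => ((hA.natEmbedding _) n : ℕ) with hF
  have hinj : Function.Injective F := fun a b h => (hA.natEmbedding _).injective (Subtype.ext h)
  have hmem : ∀ n, F n ∈ A := fun n => ((hA.natEmbedding _) n).2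
  refine ⟨Set.range (fun n => F (2 * n)), ?_, ?_, ?_⟩
  · rintro _ ⟨n, rfl⟩; exact hmem _
  · exact Set.infinite_range_of_injective (hinj.comp fun a b h => by omega)
  · apply Set.Infinite.mono (s := Set.range (fun n => F (2 * n + 1)))
    · rintro _ ⟨n, rfl⟩
      refine ⟨hmem _, ?_⟩
      rintro ⟨m, hm⟩
      have := hinj hm
      omega
    · exact Set.infinite_range_of_injective (hinj.comp fun a b h => by omega)

lemma exists_perm_maps {α : Type*} [Countable α] {s t : Set α}
    (hs : s.Infinite) (hs' : sᶜ.Infinite) (ht : t.Infinite) (ht' : tᶜ.Infinite) :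
    ∃ σ : Equiv.Perm α, ∀ x ∈ s, σ x ∈ t := by
  classical
  haveI i1 : Infinite s := hs.to_subtype
  haveI i2 : Infinite t := ht.to_subtype
  haveI i3 : Infinite {a // ¬ a ∈ s} := hs'.to_subtype
  haveI i4 : Infinite {a // ¬ a ∈ t} := ht'.to_subtype
  obtain ⟨e1⟩ : Nonempty ({a // a ∈ s} ≃ {a // a ∈ t}) := nonempty_equiv_of_countable
  obtain ⟨e2⟩ : Nonempty ({a // ¬ a ∈ s} ≃ {a // ¬ a ∈ t}) := nonempty_equiv_of_countable
  refine ⟨(Equiv.sumCompl (· ∈ s)).symm.trans ((e1.sumCongr e2).trans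
    (Equiv.sumCompl (· ∈ t))), fun x hx => ?_⟩
  simp only [Equiv.trans_apply]
  rw [Equiv.sumCompl_symm_apply_of_pos hx]
  simp only [Equiv.sumCongr_apply, Sum.map_inl, Equiv.sumCompl_apply_inl]
  exact (e1 ⟨x, hx⟩).2

lemma exists_good_perm {B P T : Set ℕ} (hPB : P ⊆ Bᶜ) (hTB : T ⊆ Bᶜ)
    (hP : P.Infinite) (hP' : (Bᶜ \ P).Infinite) (hT : T.Infinite) (hT' : (Bᶜ \ T).Infinite) :
    ∃ g : Equiv.Perm ℕ, (∀ x ∈ B, g x = x) ∧ ∀ x ∈ P, g x ∈ T := by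
  classical
  have him : ∀ Q : Set ℕ, Subtype.val '' {x : {n : ℕ // ¬ n ∈ B} | ↑x ∈ Q} = Q \ B := by
    intro Q
    ext y
    constructor
    · rintro ⟨⟨z, hz⟩, hzQ, rfl⟩; exact ⟨hzQ, hz⟩
    · rintro ⟨hQ, hB⟩; exact ⟨⟨y, hB⟩, hQ, rfl⟩
  set s : Set {n : ℕ // ¬ n ∈ B} := {x | ↑x ∈ P} with hsdef
  set t : Set {n : ℕ // ¬ n ∈ B} := {x | ↑x ∈ T} with htdef
  have hs : s.Infinite := by
    apply Set.Infinite.of_image (f := Subtype.val)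
    rw [him P]
    exact hP.mono (fun x hx => ⟨hx, hPB hx⟩)
  have hsc : sᶜ.Infinite := by
    apply Set.Infinite.of_image (f := Subtype.val)
    have : sᶜ = {x : {n : ℕ // ¬ n ∈ B} | ↑x ∈ Pᶜ} := rfl
    rw [this, him Pᶜ]
    exact hP'.mono (fun x hx => ⟨hx.2, hx.1⟩)
  have htt : t.Infinite := by
    apply Set.Infinite.of_image (f := Subtype.val)
    rw [him T]
    exact hT.mono (fun x hx => ⟨hx, hTB hx⟩)
  have htc : tᶜ.Infinite := by
    apply Set.Infinite.of_image (f := Subtype.val)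
    have : tᶜ = {x : {n : ℕ // ¬ n ∈ B} | ↑x ∈ Tᶜ} := rfl
    rw [this, him Tᶜ]
    exact hT'.mono (fun x hx => ⟨hx.2, hx.1⟩)
  obtain ⟨σ, hσ⟩ := exists_perm_maps hs hsc htt htc
  refine ⟨Equiv.Perm.subtypeCongr (Equiv.refl {n : ℕ // n ∈ B}) σ, ?_, ?_⟩
  · intro x hx
    rw [Equiv.Perm.subtypeCongr.left_apply _ _ hx]
    rfl
  · intro x hx
    rw [Equiv.Perm.subtypeCongr.right_apply _ _ (hPB hx)]
    exact hσ ⟨x, hPB hx⟩ hx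

lemma exists_free_uf {A : Set ℕ} (hA : A.Infinite) :
    ∃ r : Ultrafilter ℕ, (r : Filter ℕ) ≤ Filter.cofinite ∧ A ∈ r := by
  have hne : Filter.NeBot (Filter.cofinite ⊓ Filter.principal A) := by
    rw [Filter.inf_principal_neBot_iff]
    intro U hU
    rw [Filter.mem_cofinite] at hU
    by_contra hemp
    rw [Set.not_nonempty_iff_eq_empty] at hemp
    apply hA
    apply hU.subset
    intro x hx
    by_contra hxU
    have hmem : x ∈ U ∩ A := ⟨not_not.mp hxU, hx⟩
    rw [hemp] at hmem
    exact hmem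
  refine ⟨Ultrafilter.of (Filter.cofinite ⊓ Filter.principal A),
    le_trans (Ultrafilter.of_le _) inf_le_left, ?_⟩
  exact le_trans (Ultrafilter.of_le _) inf_le_right (Filter.mem_principal_self A)

lemma map_eq_of_fix {g : Equiv.Perm ℕ} {q : Ultrafilter ℕ} {A : Set ℕ}
    (hA : A ∈ q) (hfix : ∀ x ∈ A, g x = x) : Ultrafilter.map (⇑g) q = q := by
  have hle : (Ultrafilter.map (⇑g) q : Filter ℕ) ≤ (q : Filter ℕ) := by
    intro S hS
    rw [Ultrafilter.coe_map, Filter.mem_map]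
    exact Filter.mem_of_superset (Filter.inter_mem hA hS)
      (fun x hx => by simpa [hfix x hx.1] using hx.2)
  exact Ultrafilter.coe_injective (q.unique hle)

lemma isFree_map {g : Equiv.Perm ℕ} {p : Ultrafilter ℕ}
    (hp : (p : Filter ℕ) ≤ Filter.cofinite) :
    ((Ultrafilter.map (⇑g) p : Ultrafilter ℕ) : Filter ℕ) ≤ Filter.cofinite := by
  intro S hS
  rw [Ultrafilter.coe_map, Filter.mem_map]
  apply hp
  rw [Filter.mem_cofinite] at hS ⊢
  rw [← Set.preimage_compl]
  exact hS.preimage (g.injective.injOn)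


def fixGroup (K : Set (FreeUF ℕ)) : Subgroup (Equiv.Perm ℕ) where
  carrier := {g | ∃ A : Set ℕ, (∀ q ∈ K, A ∈ q.1) ∧ ∀ x ∈ A, g x = x}
  one_mem' := ⟨Set.univ, fun q _ => Filter.univ_mem, fun x _ => rfl⟩
  mul_mem' := by
    rintro a b ⟨A, hA, ha⟩ ⟨B, hB, hb⟩
    refine ⟨A ∩ B, fun q hq => Filter.inter_mem (hA q hq) (hB q hq), fun x hx => ?_⟩
    have h1 : b x = x := hb x hx.2
    have h2 : a x = x := ha x hx.1
    simp [Equiv.Perm.mul_apply, h1, h2]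
  inv_mem' := by
    rintro a ⟨A, hA, ha⟩
    refine ⟨A, hA, fun x hx => ?_⟩
    conv_lhs => rw [← ha x hx]
    exact a.symm_apply_apply x

theorem mem_fixGroup {K : Set (FreeUF ℕ)} {g : Equiv.Perm ℕ} :
    g ∈ fixGroup K ↔ ∃ A : Set ℕ, (∀ q ∈ K, A ∈ q.1) ∧ ∀ x ∈ A, g x = x := Iff.rfl

end KPaux

/-- For every closed nowhere dense `K ⊆ ω*` there is a transitive group
`G` of permutations of `ω` fixing every ultrafilter of `K`, such that the orbit of
every free ultrafilter outside `K` is dense in `ω*`. -/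
theorem kernel_prescribed (K : Set (FreeUF ℕ)) (hK : IsClosed K)
    (hnd : interior (closure K) = ∅) :
    ∃ G : Subgroup (Equiv.Perm ℕ),
      (∀ x y : ℕ, ∃ g ∈ G, g x = y) ∧
      (∀ q ∈ K, ∀ g ∈ G, Ultrafilter.map (⇑g) (q : FreeUF ℕ).1 = (q : FreeUF ℕ).1) ∧
      (∀ p : FreeUF ℕ, p ∉ K → Dense (freeOrbit G p.1)) := by
  classical
  refine ⟨KPaux.fixGroup K, ?_, ?_, ?_⟩
  · -- transitivity
    intro x y
    refine ⟨Equiv.swap x y, KPaux.mem_fixGroup.mpr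
      ⟨({x, y} : Set ℕ)ᶜ, fun q _ => ?_, fun z hz => ?_⟩, Equiv.swap_apply_left x y⟩
    · exact q.2 (by rw [Filter.mem_cofinite, compl_compl]
                    exact (Set.finite_singleton y).insert x)
    · have hz' : z ≠ x ∧ z ≠ y := by simpa [not_or] using hz
      exact Equiv.swap_apply_of_ne_of_ne hz'.1 hz'.2
  · -- K is fixed pointwise
    intro q hq g hg
    obtain ⟨A, hA, hfix⟩ := KPaux.mem_fixGroup.mp hg
    exact KPaux.map_eq_of_fix (hA q hq) hfix
  · -- dense orbits
    intro p hp
    rw [dense_iff_inter_open]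
    intro U hU hUne
    obtain ⟨q₀, hq₀U⟩ := hUne
    obtain ⟨V, hV, rfl⟩ := isOpen_induced_iff.mp hU
    have hq₀V : q₀.1 ∈ V := hq₀U
    obtain ⟨b, hbB, hq₀b, hbV⟩ := ultrafilterBasis_is_basis.exists_subset_of_mem_open hq₀V hV
    obtain ⟨A₀, rfl⟩ := hbB
    have hA₀q₀ : A₀ ∈ q₀.1 := hq₀b
    have hA₀inf : A₀.Infinite := KPaux.mem_free_infinite q₀.2 hA₀q₀
    -- a closedness consequence: points outside K avoid a basic closed set around K
    have step : ∀ r : FreeUF ℕ, r ∉ K →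
        ∃ B : Set ℕ, (∀ s ∈ K, B ∈ s.1) ∧ Bᶜ ∈ r.1 := by
      intro r hr
      obtain ⟨W, hW, hWK⟩ := isOpen_induced_iff.mp hK.isOpen_compl
      have hrW : r.1 ∈ W := by
        have : r ∈ (Subtype.val ⁻¹' W : Set (FreeUF ℕ)) := by rw [hWK]; exact hr
        exact this
      obtain ⟨c, hcB, hrc, hcW⟩ := ultrafilterBasis_is_basis.exists_subset_of_mem_open hrW hW
      obtain ⟨C, rfl⟩ := hcB
      refine ⟨Cᶜ, fun s hs => ?_, by rw [compl_compl]; exact hrc⟩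
      apply Ultrafilter.compl_mem_iff_notMem.mpr
      intro hCs
      have : s ∈ (Subtype.val ⁻¹' W : Set (FreeUF ℕ)) := hcW hCs
      rw [hWK] at this
      exact this hs
    obtain ⟨B₀, hB₀K, hB₀p⟩ := step p hp
    -- find a free ultrafilter containing A₀ which is outside K
    obtain ⟨r₀, hr₀free, hA₀r₀⟩ := KPaux.exists_free_uf hA₀inf
    have hOopen : IsOpen {q : FreeUF ℕ | A₀ ∈ q.1} :=
      (ultrafilter_isOpen_basic A₀).preimage continuous_subtype_val
    have hnotsub : ¬ {q : FreeUF ℕ | A₀ ∈ q.1} ⊆ K := by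
      intro hsub
      have h1 : {q : FreeUF ℕ | A₀ ∈ q.1} ⊆ interior (closure K) :=
        interior_maximal (hsub.trans subset_closure) hOopen
      rw [hnd] at h1
      exact h1 (show (⟨r₀, hr₀free⟩ : FreeUF ℕ) ∈ _ from hA₀r₀)
    obtain ⟨r', hr'O, hr'K⟩ := Set.not_subset.mp hnotsub
    obtain ⟨B₁, hB₁K, hB₁r⟩ := step r' hr'K
    set B : Set ℕ := B₀ ∩ B₁ with hBdef
    have hBK : ∀ s ∈ K, B ∈ s.1 := fun s hs => Filter.inter_mem (hB₀K s hs) (hB₁K s hs)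
    have hBc : Bᶜ = B₀ᶜ ∪ B₁ᶜ := by rw [hBdef, Set.compl_inter]
    -- the target set T
    have hTmem : A₀ ∩ B₁ᶜ ∈ r'.1 := Filter.inter_mem hr'O hB₁r
    have hTinf : (A₀ ∩ B₁ᶜ).Infinite := KPaux.mem_free_infinite r'.2 hTmem
    obtain ⟨T₀, hT₀sub, hT₀inf, hTdiff⟩ := KPaux.exists_split hTinf
    have hT₀B : T₀ ⊆ Bᶜ := fun x hx => by
      rw [hBc]; exact Or.inr (hT₀sub hx).2
    have hT₀c : (Bᶜ \ T₀).Infinite := hTdiff.mono (fun x hx =>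
      ⟨by rw [hBc]; exact Or.inr hx.1.2, hx.2⟩)
    -- the source set P
    have hPinf : (B₀ᶜ).Infinite := KPaux.mem_free_infinite p.2 hB₀p
    obtain ⟨P₀, hP₀sub, hP₀inf, hPdiff⟩ := KPaux.exists_split hPinf
    have hPmain : ∃ P' : Set ℕ, P' ∈ p.1 ∧ P' ⊆ Bᶜ ∧ (Bᶜ \ P').Infinite := by
      by_cases hc : P₀ ∈ p.1
      · refine ⟨P₀, hc, fun x hx => by rw [hBc]; exact Or.inl (hP₀sub hx), ?_⟩
        exact hPdiff.mono (fun x hx => ⟨by rw [hBc]; exact Or.inl hx.1, hx.2⟩)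
      · refine ⟨B₀ᶜ ∩ P₀ᶜ,
          Filter.inter_mem hB₀p (Ultrafilter.compl_mem_iff_notMem.mpr hc),
          fun x hx => by rw [hBc]; exact Or.inl hx.1, ?_⟩
        apply hP₀inf.mono
        intro x hx
        exact ⟨by rw [hBc]; exact Or.inl (hP₀sub hx), fun h => h.2 hx⟩
    obtain ⟨P', hP'mem, hP'B, hP'c⟩ := hPmain
    have hP'inf : P'.Infinite := KPaux.mem_free_infinite p.2 hP'mem
    obtain ⟨g, hgfix, hgmap⟩ := KPaux.exists_good_perm hP'B hT₀B hP'inf hP'c hT₀inf hT₀c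
    have hgG : g ∈ KPaux.fixGroup K := KPaux.mem_fixGroup.mpr ⟨B, hBK, hgfix⟩
    -- the translated ultrafilter
    have hmapfree : IsFree (Ultrafilter.map (⇑g) p.1) := KPaux.isFree_map p.2
    refine ⟨⟨Ultrafilter.map (⇑g) p.1, hmapfree⟩, ?_, ⟨g, hgG, rfl⟩⟩
    have hA₀map : A₀ ∈ Ultrafilter.map (⇑g) p.1 := by
      rw [Ultrafilter.mem_map]
      apply Filter.mem_of_superset hP'mem
      intro x hx
      exact (hT₀sub (hgmap x hx)).1
    exact hbV hA₀map
end

section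
/- A subset A of X_G is scattered if and only if the orbit Gp is discrete (in the subspace topology of X*) for every free ultrafilter p with A ∈ p. -/
open Set

open Set

section Aux

open Ultrafilter Function

variable {X : Type*} {G : Subgroup (Equiv.Perm X)}

/-- membership in mapped ultrafilter. -/
lemma mem_pmap {g : Equiv.Perm X} {p : Ultrafilter X} {s : Set X} :
    s ∈ Ultrafilter.map (⇑g) p ↔ ⇑g ⁻¹' s ∈ p := Ultrafilter.mem_map

lemma pmap_pmap (g h : Equiv.Perm X) (p : Ultrafilter X) :
    Ultrafilter.map (⇑g) (Ultrafilter.map (⇑h) p) = Ultrafilter.map (⇑(g * h)) p := by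
  rw [Ultrafilter.map_map]; rfl

lemma pmap_one (p : Ultrafilter X) : Ultrafilter.map (⇑(1 : Equiv.Perm X)) p = p := by
  have : ⇑(1 : Equiv.Perm X) = id := rfl
  rw [this, Ultrafilter.map_id]

lemma pmap_inv_pmap (g : Equiv.Perm X) (p : Ultrafilter X) :
    Ultrafilter.map (⇑g⁻¹) (Ultrafilter.map (⇑g) p) = p := by
  rw [pmap_pmap, inv_mul_cancel, pmap_one]

lemma pmap_cancel {g : Equiv.Perm X} {p q : Ultrafilter X}
    (h : Ultrafilter.map (⇑g) p = Ultrafilter.map (⇑g) q) : p = q := by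
  have := congrArg (Ultrafilter.map (⇑g⁻¹)) h
  rwa [pmap_inv_pmap, pmap_inv_pmap] at this

lemma mem_ufOrbit {p q : Ultrafilter X} :
    q ∈ ufOrbit G p ↔ ∃ g ∈ G, q = Ultrafilter.map (⇑g) p := Iff.rfl

lemma self_mem_ufOrbit (p : Ultrafilter X) : p ∈ ufOrbit G p :=
  ⟨1, one_mem _, (pmap_one p).symm⟩

lemma pmap_mem_ufOrbit {p q : Ultrafilter X} (hq : q ∈ ufOrbit G p) {g : Equiv.Perm X}
    (hg : g ∈ G) : Ultrafilter.map (⇑g) q ∈ ufOrbit G p := by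
  obtain ⟨h, hh, rfl⟩ := hq
  exact ⟨g * h, mul_mem hg hh, (pmap_pmap g h p).symm⟩

lemma ufOrbit_eq {p q : Ultrafilter X} (hq : q ∈ ufOrbit G p) :
    ufOrbit G q = ufOrbit G p := by
  obtain ⟨g, hg, rfl⟩ := hq
  ext r
  constructor
  · rintro ⟨h, hh, rfl⟩
    rw [pmap_pmap]
    exact ⟨h * g, mul_mem hh hg, rfl⟩
  · rintro ⟨h, hh, rfl⟩
    refine ⟨h * g⁻¹, mul_mem hh (inv_mem hg), ?_⟩
    rw [← pmap_pmap, pmap_inv_pmap]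

lemma isFree_pmap {p : Ultrafilter X} (hp : IsFree p) (g : Equiv.Perm X) :
    IsFree (Ultrafilter.map (⇑g) p) := by
  intro s hs
  have : ⇑g ⁻¹' s ∈ p := hp ?_
  · exact this
  rw [Filter.mem_cofinite] at hs ⊢
  rw [← Set.preimage_compl]
  exact hs.preimage (g.injective.injOn)

lemma isFree_of_mem_orbit {p q : Ultrafilter X} (hp : IsFree p) (hq : q ∈ ufOrbit G p) :
    IsFree q := by
  obtain ⟨g, _, rfl⟩ := hq
  exact isFree_pmap hp g

/-- members of a free ultrafilter are infinite -/
lemma infinite_of_mem_free {p : Ultrafilter X} (hp : IsFree p) {s : Set X} (hs : s ∈ p) :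
    s.Infinite := by
  intro hfin
  have : sᶜ ∈ p := hp (by rw [Filter.mem_cofinite, compl_compl]; exact hfin)
  exact (Ultrafilter.compl_notMem_iff.2 hs) this

/-- distinct ultrafilters have disjoint members -/
lemma exists_sep {p q : Ultrafilter X} (h : p ≠ q) : ∃ s : Set X, s ∈ p ∧ sᶜ ∈ q := by
  by_contra hc
  push_neg at hc
  refine h (Ultrafilter.coe_injective ?_)
  apply Filter.ext
  intro s
  constructor
  · intro hs
    have := hc s hs
    rw [Ultrafilter.compl_notMem_iff] at this
    exact this
  · intro hs
    by_contra hns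
    have : sᶜ ∈ p := Ultrafilter.compl_mem_iff_notMem.2 hns
    have := hc sᶜ this
    rw [compl_compl] at this
    exact this hs

/-- existence of a free ultrafilter containing an infinite set -/
lemma exists_free_mem {Y : Set X} (hY : Y.Infinite) : ∃ u : Ultrafilter X, IsFree u ∧ Y ∈ u := by
  have hne : Filter.NeBot (Filter.cofinite ⊓ Filter.principal Y) := by
    rw [Filter.inf_principal_neBot_iff]
    intro U hU
    rw [Filter.mem_cofinite] at hU
    have : (Y \ Uᶜ).Infinite := hY.diff hU
    obtain ⟨x, hx⟩ := this.nonempty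
    exact ⟨x, not_not.1 hx.2, hx.1⟩
  obtain ⟨u, hu⟩ := Ultrafilter.exists_le (Filter.cofinite ⊓ Filter.principal Y)
  refine ⟨u, le_trans hu inf_le_left, ?_⟩
  have := le_trans hu inf_le_right
  rwa [Filter.le_principal_iff] at this

end Aux
section Aux2

variable {X : Type*} {G : Subgroup (Equiv.Perm X)}

lemma preimage_inv_perm (g : Equiv.Perm X) (s : Set X) : ⇑g⁻¹ ⁻¹' s = ⇑g '' s := by
  ext x
  constructor
  · intro hx
    exact ⟨g⁻¹ x, hx, by simp⟩
  · rintro ⟨y, hy, rfl⟩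
    simpa using hy

/-- Lemma B: discreteness of the orbit is equivalent to existence of an isolating set. -/
lemma discrete_iff_isolating (p : Ultrafilter X) (hp : IsFree p) :
    DiscreteTopology ↥(freeOrbit G p) ↔
      ∃ S ∈ p, ∀ r ∈ ufOrbit G p, S ∈ r → r = p := by
  constructor
  · intro hd
    set z : ↥(freeOrbit G p) := ⟨⟨p, hp⟩, self_mem_ufOrbit p⟩ with hz
    have hopen : IsOpen {z} := isOpen_discrete {z}
    rw [isOpen_induced_iff] at hopen
    obtain ⟨t, ht, hteq⟩ := hopen
    replace ht := isOpen_induced_iff.1 (show @IsOpen {q : Ultrafilter X // IsFree q} _ t from ht)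
    obtain ⟨s, hs, hseq⟩ := ht
    have hpz : p ∈ s := by
      have : z ∈ (Subtype.val ⁻¹' t : Set ↥(freeOrbit G p)) := by rw [hteq]; rfl
      rw [← hseq] at this
      exact this
    obtain ⟨v, hv, hpv, hvs⟩ := ultrafilterBasis_is_basis.exists_subset_of_mem_open hpz hs
    obtain ⟨S, rfl⟩ := hv
    refine ⟨S, hpv, fun r hr hSr => ?_⟩
    have hrf : IsFree r := isFree_of_mem_orbit hp hr
    set w : ↥(freeOrbit G p) := ⟨⟨r, hrf⟩, hr⟩ with hw
    have : w ∈ (Subtype.val ⁻¹' t : Set ↥(freeOrbit G p)) := by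
      rw [← hseq]
      exact hvs hSr
    rw [hteq] at this
    have : w = z := this
    have := congrArg (fun a => (a : ↥(freeOrbit G p)).1.1) this
    exact this
  · rintro ⟨S, hS, hiso⟩
    rw [discreteTopology_iff_isOpen_singleton]
    rintro ⟨⟨r, hrf⟩, hr⟩
    obtain ⟨g, hg, hre0⟩ := hr
    have hre : r = Ultrafilter.map (⇑g) p := hre0
    have key : {(⟨⟨r, hrf⟩, ⟨g, hg, hre0⟩⟩ : ↥(freeOrbit G p))} =
        (fun b : ↥(freeOrbit G p) => (b.1.1 : Ultrafilter X)) ⁻¹' {u | ⇑g '' S ∈ u} := by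
      ext b
      constructor
      · rintro rfl
        show ⇑g '' S ∈ r
        rw [hre, mem_pmap, Set.preimage_image_eq _ g.injective]
        exact hS
      · intro hb
        have hb' : ⇑g '' S ∈ (b.1.1 : Ultrafilter X) := hb
        have horb : Ultrafilter.map (⇑g⁻¹) b.1.1 ∈ ufOrbit G p :=
          pmap_mem_ufOrbit b.2 (inv_mem hg)
        have hmem : S ∈ Ultrafilter.map (⇑g⁻¹) b.1.1 := by
          rw [mem_pmap, preimage_inv_perm]
          exact hb'
        have := hiso _ horb hmem
        have hb1 : b.1.1 = Ultrafilter.map (⇑g) p := by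
          have := congrArg (Ultrafilter.map (⇑g)) this
          rwa [pmap_pmap, mul_inv_cancel, pmap_one] at this
        have : b = ⟨⟨r, hrf⟩, ⟨g, hg, hre0⟩⟩ := by
          apply Subtype.ext
          apply Subtype.ext
          rw [hb1]
          exact hre.symm
        simp [this]
    rw [key]
    have c1 : Continuous (fun b : ↥(freeOrbit G p) => (b.1 : FreeUF X)) := continuous_subtype_val
    have c2 : Continuous (fun q : FreeUF X => (q.1 : Ultrafilter X)) := continuous_subtype_val
    exact (ultrafilter_isOpen_basic _).preimage (c2.comp c1)
end Aux2
section Aux3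

variable {X : Type*} {G : Subgroup (Equiv.Perm X)}

lemma continuous_pmap (g : Equiv.Perm X) :
    Continuous (Ultrafilter.map (⇑g) : Ultrafilter X → Ultrafilter X) := by
  apply ultrafilterBasis_is_basis.continuous_iff.2
  rintro s ⟨t, rfl⟩
  have : (Ultrafilter.map (⇑g) : Ultrafilter X → Ultrafilter X) ⁻¹' {u | t ∈ u} =
      {u | ⇑g ⁻¹' t ∈ u} := by
    ext u
    simp [mem_pmap]
  rw [this]
  exact ultrafilter_isOpen_basic _

/-- the `⇐` core: discrete orbits over `A` imply `A` is scattered. -/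
lemma scattered_of_isolating [Infinite X] {A : Set X}
    (hiso : ∀ p : Ultrafilter X, IsFree p → A ∈ p →
      ∃ S ∈ p, ∀ r ∈ ufOrbit G p, S ∈ r → r = p) :
    IsScattered G A := by
  intro Y hYA hY
  -- the closed set `Y*` of free ultrafilters containing `Y`
  set Ys : Set (Ultrafilter X) := {u | IsFree u ∧ Y ∈ u} with hYs
  have hYsclosed : IsClosed Ys := by
    have : Ys = (⋂ s ∈ {s : Set X | sᶜ.Finite}, {u : Ultrafilter X | s ∈ u}) ∩
        {u : Ultrafilter X | Y ∈ u} := by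
      ext u
      simp only [Set.mem_inter_iff, Set.mem_iInter, Set.mem_setOf_eq, hYs]
      constructor
      · rintro ⟨hf, hYu⟩
        exact ⟨fun s hs => hf (Filter.mem_cofinite.2 hs), hYu⟩
      · rintro ⟨hf, hYu⟩
        refine ⟨fun s hs => hf s (Filter.mem_cofinite.1 hs), hYu⟩
    rw [this]
    exact IsClosed.inter (isClosed_biInter fun s _ => ultrafilter_isClosed_basic s)
      (ultrafilter_isClosed_basic Y)
  have hYsne : Ys.Nonempty := by
    obtain ⟨u, hu1, hu2⟩ := exists_free_mem hY
    exact ⟨u, hu1, hu2⟩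
  -- the collection for Zorn
  set Coll : Set (Set (Ultrafilter X)) :=
    {K | IsClosed K ∧ (∀ g ∈ G, ∀ u ∈ K, Ultrafilter.map (⇑g) u ∈ K) ∧ (K ∩ Ys).Nonempty}
    with hColl
  have huniv : Set.univ ∈ Coll := by
    refine ⟨isClosed_univ, fun g _ u _ => trivial, ?_⟩
    obtain ⟨u, hu⟩ := hYsne
    exact ⟨u, trivial, hu⟩
  obtain ⟨M, -, hMmem, hMmin⟩ : ∃ M, M ⊆ Set.univ ∧ Minimal (· ∈ Coll) M := by
    apply zorn_superset_nonempty
    · intro c hcsub hchain hcne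
      refine ⟨⋂₀ c, ⟨?_, ?_, ?_⟩, fun s hs => Set.sInter_subset_of_mem hs⟩
      · exact isClosed_sInter fun K hK => (hcsub hK).1
      · intro g hg u hu
        rw [Set.mem_sInter] at hu ⊢
        exact fun K hK => (hcsub hK).2.1 g hg u (hu K hK)
      · -- compactness: directed intersection of nonempty compacts
        have : (⋂ K : c, ((K : Set (Ultrafilter X)) ∩ Ys)).Nonempty := by
          haveI : Nonempty c := hcne.to_subtype
          apply IsCompact.nonempty_iInter_of_directed_nonempty_isCompact_isClosed
          · rintro ⟨K1, hK1⟩ ⟨K2, hK2⟩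
            rcases hchain.total hK1 hK2 with h | h
            · exact ⟨⟨K1, hK1⟩, le_refl _, Set.inter_subset_inter_left _ h⟩
            · exact ⟨⟨K2, hK2⟩, Set.inter_subset_inter_left _ h, le_refl _⟩
          · exact fun K => (hcsub K.2).2.2
          · exact fun K => (((hcsub K.2).1.inter hYsclosed).isCompact)
          · exact fun K => (hcsub K.2).1.inter hYsclosed
        obtain ⟨u, hu⟩ := this
        rw [Set.mem_iInter] at hu
        obtain ⟨K0, hK0⟩ := hcne
        refine ⟨u, Set.mem_sInter.2 fun K hK => (hu ⟨K, hK⟩).1, (hu ⟨K0, hK0⟩).2⟩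
    · exact huniv
  obtain ⟨hMclosed, hMinv, hMne⟩ := hMmem
  obtain ⟨q, hqM, hqf, hqY⟩ := hMne
  refine ⟨q, hqf, hqY, ?_⟩
  rw [← Set.not_infinite]
  intro hinf
  have hDsub : compan G q Y ⊆ M ∩ Ys := by
    rintro r ⟨hrY, hrorb⟩
    obtain ⟨g, hg, rfl⟩ := hrorb
    exact ⟨hMinv g hg q hqM, isFree_pmap hqf g, hrY⟩
  obtain ⟨z, hzMY, hzacc⟩ := hinf.exists_accPt_of_subset_isCompact
    ((hMclosed.inter hYsclosed).isCompact) hDsub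
  have hzf : IsFree z := hzMY.2.1
  have hzY : Y ∈ z := hzMY.2.2
  have hzA : A ∈ z := Filter.mem_of_superset hzY hYA
  obtain ⟨T, hTz, hTiso⟩ := hiso z hzf hzA
  -- the closure of the orbit of `z` is in `Coll` and contained in `M`, hence equals `M`
  have horbM : ufOrbit G z ⊆ M := by
    rintro r ⟨g, hg, rfl⟩
    exact hMinv g hg z hzMY.1
  have hclM : M ⊆ closure (ufOrbit G z) := by
    refine hMmin ⟨isClosed_closure, ?_, ?_⟩ (closure_minimal horbM hMclosed)
    · intro g hg u hu
      have h1 : Ultrafilter.map (⇑g) u ∈ Ultrafilter.map (⇑g) '' closure (ufOrbit G z) :=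
        ⟨u, hu, rfl⟩
      have h2 : Ultrafilter.map (⇑g) '' closure (ufOrbit G z) ⊆
          closure (Ultrafilter.map (⇑g) '' ufOrbit G z) :=
        image_closure_subset_closure_image (continuous_pmap g)
      refine closure_mono ?_ (h2 h1)
      rintro r ⟨r', hr', rfl⟩
      exact pmap_mem_ufOrbit hr' hg
    · exact ⟨z, subset_closure (self_mem_ufOrbit z), hzMY.2⟩
  have hUM : {u : Ultrafilter X | T ∈ u} ∩ M ⊆ {z} := by
    have h1 : {u : Ultrafilter X | T ∈ u} ∩ M ⊆
        closure ({u : Ultrafilter X | T ∈ u} ∩ ufOrbit G z) := by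
      intro u hu
      exact (ultrafilter_isOpen_basic T).inter_closure ⟨hu.1, hclM hu.2⟩
    have h2 : {u : Ultrafilter X | T ∈ u} ∩ ufOrbit G z ⊆ {z} := by
      rintro r ⟨hrT, hrorb⟩
      exact hTiso r hrorb hrT
    intro u hu
    have := (closure_mono h2) (h1 hu)
    rwa [closure_singleton] at this
  rw [accPt_iff_nhds] at hzacc
  obtain ⟨r, ⟨hrU, hrD⟩, hrne⟩ := hzacc {u : Ultrafilter X | T ∈ u}
    ((ultrafilter_isOpen_basic T).mem_nhds hTz)
  exact hrne (hUM ⟨hrU, (hDsub hrD).1⟩)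

end Aux3
section Words

variable {X : Type*}

/-- the word `v k ^ δ k * ⋯ * v (n-1) ^ δ (n-1)`. -/
def wrd (v : ℕ → Equiv.Perm X) (δ : ℕ → Bool) (k : ℕ) : ℕ → Equiv.Perm X
  | 0 => 1
  | n + 1 => if k ≤ n then wrd v δ k n * (if δ n then v n else 1) else 1

variable {G : Subgroup (Equiv.Perm X)} {v v' : ℕ → Equiv.Perm X} {δ δ' : ℕ → Bool}

lemma wrd_succ {k n : ℕ} (h : k ≤ n) :
    wrd v δ k (n + 1) = wrd v δ k n * (if δ n then v n else 1) := by
  simp [wrd, h]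

lemma wrd_of_le {k n : ℕ} (h : n ≤ k) : wrd v δ k n = 1 := by
  cases n with
  | zero => rfl
  | succ m => simp [wrd, Nat.not_le.2 (Nat.lt_of_succ_le h)]

lemma wrd_split {k n : ℕ} (h : k ≤ n) : wrd v δ 0 n = wrd v δ 0 k * wrd v δ k n := by
  induction n, h using Nat.le_induction with
  | base => rw [wrd_of_le le_rfl, mul_one]
  | succ n hkn ih =>
      rw [wrd_succ (Nat.zero_le n), wrd_succ hkn, ih, mul_assoc]

lemma wrd_head {k n : ℕ} (h : k < n) :
    wrd v δ k n = (if δ k then v k else 1) * wrd v δ (k + 1) n := by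
  induction n, h using Nat.le_induction with
  | base => rw [wrd_succ le_rfl, wrd_of_le le_rfl, wrd_of_le le_rfl, one_mul, mul_one]
  | succ n hkn ih =>
      rw [wrd_succ (Nat.le_of_succ_le hkn), ih, wrd_succ hkn, mul_assoc]

lemma wrd_congr {k n : ℕ} (h : ∀ i, k ≤ i → i < n → δ i = δ' i) :
    wrd v δ k n = wrd v δ' k n := by
  induction n with
  | zero => rfl
  | succ n ih =>
      by_cases hkn : k ≤ n
      · rw [wrd_succ hkn, wrd_succ hkn, ih (fun i h1 h2 => h i h1 (Nat.lt_succ_of_lt h2)),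
          h n hkn (Nat.lt_succ_self n)]
      · rw [wrd_of_le (Nat.succ_le_of_lt (Nat.not_le.1 hkn)),
          wrd_of_le (Nat.succ_le_of_lt (Nat.not_le.1 hkn))]

lemma wrd_congr_v {k n : ℕ} (h : ∀ i, k ≤ i → i < n → v i = v' i) :
    wrd v δ k n = wrd v' δ k n := by
  induction n with
  | zero => rfl
  | succ n ih =>
      by_cases hkn : k ≤ n
      · rw [wrd_succ hkn, wrd_succ hkn, ih (fun i h1 h2 => h i h1 (Nat.lt_succ_of_lt h2)),
          h n hkn (Nat.lt_succ_self n)]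
      · rw [wrd_of_le (Nat.succ_le_of_lt (Nat.not_le.1 hkn)),
          wrd_of_le (Nat.succ_le_of_lt (Nat.not_le.1 hkn))]

lemma wrd_mem {k n : ℕ} (h : ∀ i, k ≤ i → i < n → v i ∈ G) : wrd v δ k n ∈ G := by
  induction n with
  | zero => exact one_mem G
  | succ n ih =>
      by_cases hkn : k ≤ n
      · rw [wrd_succ hkn]
        refine mul_mem (ih fun i h1 h2 => h i h1 (Nat.lt_succ_of_lt h2)) ?_
        by_cases hd : δ n
        · simpa [hd] using h n hkn (Nat.lt_succ_self n)
        · simpa [hd] using one_mem G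
      · rw [wrd_of_le (Nat.succ_le_of_lt (Nat.not_le.1 hkn))]
        exact one_mem G

/-- extension of a finite boolean string by `false`. -/
def extB (m : ℕ) (d : Fin m → Bool) : ℕ → Bool := fun i => if h : i < m then d ⟨i, h⟩ else false

lemma wrd_extB {m : ℕ} (v : ℕ → Equiv.Perm X) (δ : ℕ → Bool) :
    wrd v δ 0 m = wrd v (extB m (fun i : Fin m => δ i.1)) 0 m :=
  wrd_congr (fun i _ h2 => by simp [extB, h2])

end Words
section Sep

variable {X : Type*} {G : Subgroup (Equiv.Perm X)}

lemma sep_lemma (p : Ultrafilter X) (v : ℕ → Equiv.Perm X) (n : ℕ)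
    (hdist : ∀ δ δ' : ℕ → Bool, (∃ i, i < n ∧ δ i ≠ δ' i) →
      Ultrafilter.map (⇑(wrd v δ 0 n)) p ≠ Ultrafilter.map (⇑(wrd v δ' 0 n)) p) :
    ∃ C ∈ p,
      (∀ q : Ultrafilter X, C ∈ q → ∀ δ δ' : ℕ → Bool, (∃ i, i < n ∧ δ i ≠ δ' i) →
        Ultrafilter.map (⇑(wrd v δ 0 n)) q ≠ Ultrafilter.map (⇑(wrd v δ' 0 n)) q) ∧
      (∀ x ∈ C, ∀ δ δ' : ℕ → Bool, (∃ i, i < n ∧ δ i ≠ δ' i) →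
        wrd v δ 0 n x ≠ wrd v δ' 0 n x) := by
  classical
  set I := (Fin n → Bool) × (Fin n → Bool)
  set w : (Fin n → Bool) → Equiv.Perm X := fun d => wrd v (extB n d) 0 n with hw
  set Cp : I → Set X := fun e =>
    if h : Ultrafilter.map (⇑(w e.1)) p ≠ Ultrafilter.map (⇑(w e.2)) p then
      ⇑(w e.1) ⁻¹' (exists_sep h).choose ∩ ⇑(w e.2) ⁻¹' (exists_sep h).chooseᶜ
    else Set.univ with hCp
  have hCpm : ∀ e : I, Cp e ∈ p := by
    intro e
    simp only [hCp]
    by_cases h : Ultrafilter.map (⇑(w e.1)) p ≠ Ultrafilter.map (⇑(w e.2)) p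
    · rw [dif_pos h]
      obtain ⟨h1, h2⟩ := (exists_sep h).choose_spec
      exact Filter.inter_mem (mem_pmap.1 h1) (mem_pmap.1 h2)
    · rw [dif_neg h]
      exact Filter.univ_mem
  refine ⟨⋂ e : I, Cp e, Filter.iInter_mem.2 hCpm, ?_, ?_⟩
  · intro q hCq δ δ' hne
    obtain ⟨i, hi, hne⟩ := hne
    have hwδ : wrd v δ 0 n = w (fun j : Fin n => δ j.1) := wrd_extB v δ
    have hwδ' : wrd v δ' 0 n = w (fun j : Fin n => δ' j.1) := wrd_extB v δ'
    set e : I := (fun j : Fin n => δ j.1, fun j : Fin n => δ' j.1) with he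
    have hmapne : Ultrafilter.map (⇑(w e.1)) p ≠ Ultrafilter.map (⇑(w e.2)) p := by
      rw [← hwδ, ← hwδ']
      exact hdist δ δ' ⟨i, hi, hne⟩
    have hsub : (⋂ e : I, Cp e) ⊆ Cp e := Set.iInter_subset _ e
    have hCpe : Cp e ∈ q := Filter.mem_of_superset hCq hsub
    simp only [hCp] at hCpe
    rw [dif_pos hmapne] at hCpe
    obtain ⟨s, hs⟩ : ∃ s : Set X, s = (exists_sep hmapne).choose := ⟨_, rfl⟩
    rw [← hs] at hCpe
    have h1 : s ∈ Ultrafilter.map (⇑(w e.1)) q :=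
      mem_pmap.2 (Filter.mem_of_superset hCpe (Set.inter_subset_left))
    have h2 : sᶜ ∈ Ultrafilter.map (⇑(w e.2)) q :=
      mem_pmap.2 (Filter.mem_of_superset hCpe (Set.inter_subset_right))
    rw [hwδ, hwδ']
    intro heq
    rw [heq] at h1
    exact (Ultrafilter.compl_notMem_iff.2 h1) h2
  · intro x hx δ δ' hne
    obtain ⟨i, hi, hne⟩ := hne
    have hwδ : wrd v δ 0 n = w (fun j : Fin n => δ j.1) := wrd_extB v δ
    have hwδ' : wrd v δ' 0 n = w (fun j : Fin n => δ' j.1) := wrd_extB v δ'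
    set e : I := (fun j : Fin n => δ j.1, fun j : Fin n => δ' j.1) with he
    have hmapne : Ultrafilter.map (⇑(w e.1)) p ≠ Ultrafilter.map (⇑(w e.2)) p := by
      rw [← hwδ, ← hwδ']
      exact hdist δ δ' ⟨i, hi, hne⟩
    have hxe : x ∈ Cp e := Set.mem_iInter.1 hx e
    simp only [hCp] at hxe
    rw [dif_pos hmapne] at hxe
    rw [hwδ, hwδ']
    intro heq
    have h1 : w e.1 x ∈ (exists_sep hmapne).choose := hxe.1
    have h2 : w e.2 x ∈ (exists_sep hmapne).chooseᶜ := hxe.2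
    rw [heq] at h1
    exact h2 h1

end Sep
section Step

/-- invariant for the recursive construction of a piecewise shifted FP-set. -/
def StepInv {X : Type*} (G : Subgroup (Equiv.Perm X)) (p : Ultrafilter X) (A : Set X)
    (n : ℕ) (v : ℕ → Equiv.Perm X) (x : ℕ → X) : Prop :=
  (∀ i, i < n → v i ∈ G) ∧
  (∀ δ δ' : ℕ → Bool, (∃ i, i < n ∧ δ i ≠ δ' i) →
    Ultrafilter.map (⇑(wrd v δ 0 n)) p ≠ Ultrafilter.map (⇑(wrd v δ' 0 n)) p) ∧
  (∀ δ : ℕ → Bool, ⇑(wrd v δ 0 n) ⁻¹' A ∈ p) ∧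
  (∀ m, m < n → ∀ δ : ℕ → Bool, wrd v δ 0 (m+1) (x m) ∈ A) ∧
  (∀ m, m < n → ∀ δ δ' : ℕ → Bool, (∃ i, i < m+1 ∧ δ i ≠ δ' i) →
    wrd v δ 0 (m+1) (x m) ≠ wrd v δ' 0 (m+1) (x m)) ∧
  (∀ m' m, m' < m → m < n → ∀ δ δ' : ℕ → Bool,
    wrd v δ 0 (m+1) (x m) ≠ wrd v δ' 0 (m'+1) (x m'))

variable {X : Type*} {G : Subgroup (Equiv.Perm X)}

lemma step_exists {p : Ultrafilter X} {A : Set X} (hp : IsFree p)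
    (H : ∀ B ∈ p, (compan G p B).Infinite)
    (n : ℕ) (v : ℕ → Equiv.Perm X) (x : ℕ → X) (h : StepInv G p A n v x) :
    ∃ g xm, StepInv G p A (n+1) (Function.update v n g) (Function.update x n xm) := by
  classical
  obtain ⟨h1, h2, h3, h4, h5, h6⟩ := h
  -- separation set at level n
  obtain ⟨C, hCp, hCq, -⟩ := sep_lemma p v n h2
  -- the set `D` ensuring membership of translates in `A`
  set D : Set X := ⋂ d : Fin n → Bool, ⇑(wrd v (extB n d) 0 n) ⁻¹' A with hD
  have hDp : D ∈ p := Filter.iInter_mem.2 fun d => h3 _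
  have hDsub : ∀ δ : ℕ → Bool, D ⊆ ⇑(wrd v δ 0 n) ⁻¹' A := by
    intro δ
    have := Set.iInter_subset (fun d : Fin n → Bool => ⇑(wrd v (extB n d) 0 n) ⁻¹' A)
      (fun j : Fin n => δ j.1)
    rwa [← wrd_extB] at this
  -- the finite set of ultrafilters to avoid
  set F : Set (Ultrafilter X) := Set.range (fun e : (Fin n → Bool) × (Fin n → Bool) =>
    Ultrafilter.map (⇑((wrd v (extB n e.1) 0 n)⁻¹ * wrd v (extB n e.2) 0 n)) p) with hF
  -- pick `q` in the companion of `C ∩ D` avoiding `F`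
  have hBp : C ∩ D ∈ p := Filter.inter_mem hCp hDp
  have hFfin : F.Finite := Set.finite_range _
  obtain ⟨q, ⟨hBq, hqorb⟩, hqF⟩ := ((H _ hBp).diff hFfin).nonempty
  obtain ⟨g, hgG, hqeq⟩ := hqorb
  have hCq' : C ∈ q := Filter.mem_of_superset hBq Set.inter_subset_left
  have hDq : D ∈ q := Filter.mem_of_superset hBq Set.inter_subset_right
  set v' : ℕ → Equiv.Perm X := Function.update v n g with hv'
  have hvv' : ∀ i, i < n → v i = v' i := fun i hi =>
    (Function.update_of_ne (Nat.ne_of_lt hi) g v).symm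
  have hw' : ∀ δ : ℕ → Bool, wrd v' δ 0 (n+1) = wrd v δ 0 n * (if δ n then g else 1) := by
    intro δ
    rw [wrd_succ (Nat.zero_le n), ← wrd_congr_v (fun i _ h2 => hvv' i h2), hv',
      Function.update_self]
  have hmap : ∀ δ : ℕ → Bool, Ultrafilter.map (⇑(wrd v' δ 0 (n+1))) p =
      if δ n then Ultrafilter.map (⇑(wrd v δ 0 n)) q else Ultrafilter.map (⇑(wrd v δ 0 n)) p := by
    intro δ
    rw [hw']
    by_cases hδ : δ n
    · rw [if_pos hδ, if_pos hδ, ← pmap_pmap, ← hqeq]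
    · rw [if_neg hδ, if_neg hδ, mul_one]
  -- mixed case claim
  have hmixed : ∀ δ δ' : ℕ → Bool,
      Ultrafilter.map (⇑(wrd v δ 0 n)) q ≠ Ultrafilter.map (⇑(wrd v δ' 0 n)) p := by
    intro δ δ' heq
    apply hqF
    rw [hF]
    have h1 : q = Ultrafilter.map (⇑((wrd v δ 0 n)⁻¹ * wrd v δ' 0 n)) p := by
      rw [← pmap_pmap, ← heq, pmap_pmap, inv_mul_cancel, pmap_one]
    refine ⟨(fun j : Fin n => δ j.1, fun j : Fin n => δ' j.1), ?_⟩
    show Ultrafilter.map (⇑((wrd v (extB n fun j : Fin n => δ j.1) 0 n)⁻¹ *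
      wrd v (extB n fun j : Fin n => δ' j.1) 0 n)) p = q
    rw [← wrd_extB, ← wrd_extB, ← h1]
  -- the new distinctness property
  have hb' : ∀ δ δ' : ℕ → Bool, (∃ i, i < n + 1 ∧ δ i ≠ δ' i) →
      Ultrafilter.map (⇑(wrd v' δ 0 (n+1))) p ≠ Ultrafilter.map (⇑(wrd v' δ' 0 (n+1))) p := by
    intro δ δ' ⟨i, hi, hne⟩
    rw [hmap, hmap]
    by_cases hδ : δ n <;> by_cases hδ' : δ' n
    · rw [if_pos hδ, if_pos hδ']
      have hlt : i < n := by
        rcases Nat.lt_succ_iff_lt_or_eq.1 hi with hlt | heq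
        · exact hlt
        · rw [heq, hδ, hδ'] at hne
          exact absurd rfl hne
      exact hCq q hCq' δ δ' ⟨i, hlt, hne⟩
    · rw [if_pos hδ, if_neg hδ']
      exact hmixed δ δ'
    · rw [if_neg hδ, if_pos hδ']
      exact fun heq => hmixed δ' δ heq.symm
    · rw [if_neg hδ, if_neg hδ']
      have hlt : i < n := by
        rcases Nat.lt_succ_iff_lt_or_eq.1 hi with hlt | heq
        · exact hlt
        · rw [Bool.not_eq_true] at hδ hδ'
          rw [heq, hδ, hδ'] at hne
          exact absurd rfl hne
      exact h2 δ δ' ⟨i, hlt, hne⟩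
  -- the new A-membership property
  have hc' : ∀ δ : ℕ → Bool, ⇑(wrd v' δ 0 (n+1)) ⁻¹' A ∈ p := by
    intro δ
    rw [hw']
    by_cases hδ : δ n
    · rw [if_pos hδ]
      have hcomp : ⇑(wrd v δ 0 n * g) = ⇑(wrd v δ 0 n) ∘ ⇑g := rfl
      rw [hcomp, Set.preimage_comp]
      have : ⇑(wrd v δ 0 n) ⁻¹' A ∈ q := Filter.mem_of_superset hDq (hDsub δ)
      rw [hqeq] at this
      exact mem_pmap.1 this
    · rw [if_neg hδ, mul_one]
      exact h3 δ
  -- level n+1 separation and membership sets, and choice of `xm`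
  obtain ⟨C', hC'p, -, hC'pt⟩ := sep_lemma p v' (n+1) hb'
  set D' : Set X := ⋂ d : Fin (n+1) → Bool, ⇑(wrd v' (extB (n+1) d) 0 (n+1)) ⁻¹' A with hD'
  have hD'p : D' ∈ p := Filter.iInter_mem.2 fun d => hc' _
  have hD'sub : ∀ δ : ℕ → Bool, D' ⊆ ⇑(wrd v' δ 0 (n+1)) ⁻¹' A := by
    intro δ
    have := Set.iInter_subset (fun d : Fin (n+1) → Bool => ⇑(wrd v' (extB (n+1) d) 0 (n+1)) ⁻¹' A)
      (fun j : Fin (n+1) => δ j.1)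
    rwa [← wrd_extB] at this
  set oldSet : Set X := ⋃ m ∈ Finset.range n,
    Set.range (fun d : Fin (m+1) → Bool => wrd v (extB (m+1) d) 0 (m+1) (x m)) with hOld
  have hOldfin : oldSet.Finite := Set.Finite.biUnion (Finset.range n).finite_toSet
    (fun m _ => Set.finite_range _)
  have hOldmem : ∀ m, m < n → ∀ δ : ℕ → Bool, wrd v δ 0 (m+1) (x m) ∈ oldSet := by
    intro m hm δ
    rw [wrd_extB v δ]
    exact Set.mem_biUnion (Finset.mem_range.2 hm) ⟨fun j : Fin (m+1) => δ j.1, rfl⟩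
  set garb : Set X := ⋃ d : Fin (n+1) → Bool, ⇑(wrd v' (extB (n+1) d) 0 (n+1)) ⁻¹' oldSet
    with hgarb
  have hgarbfin : garb.Finite :=
    Set.finite_iUnion fun d => hOldfin.preimage ((Equiv.injective _).injOn)
  obtain ⟨xm, hxmCD, hxmg⟩ :=
    ((infinite_of_mem_free hp (Filter.inter_mem hC'p hD'p)).diff hgarbfin).nonempty
  have hxmC' : xm ∈ C' := hxmCD.1
  have hxmD' : xm ∈ D' := hxmCD.2
  have hxmg' : ∀ δ : ℕ → Bool, wrd v' δ 0 (n+1) xm ∉ oldSet := by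
    intro δ hmem
    apply hxmg
    rw [hgarb]
    refine Set.mem_iUnion.2 ⟨fun j : Fin (n+1) => δ j.1, ?_⟩
    rwa [Set.mem_preimage, ← wrd_extB]
  set x' : ℕ → X := Function.update x n xm with hx'
  have hxx' : ∀ m, m < n → x m = x' m := fun m hm =>
    (Function.update_of_ne (Nat.ne_of_lt hm) xm x).symm
  have hwlow : ∀ m, m < n → ∀ δ : ℕ → Bool, wrd v' δ 0 (m+1) = wrd v δ 0 (m+1) := by
    intro m hm δ
    exact wrd_congr_v fun i _ hi => (hvv' i (Nat.lt_of_lt_of_le hi (Nat.succ_le_of_lt hm))).symm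
  refine ⟨g, xm, ?_, ?_, ?_, ?_, ?_, ?_⟩
  · -- (a)
    intro i hi
    rcases Nat.lt_succ_iff_lt_or_eq.1 hi with hlt | rfl
    · rw [Function.update_of_ne (Nat.ne_of_lt hlt)]
      exact h1 i hlt
    · rw [Function.update_self]
      exact hgG
  · exact hb'
  · exact hc'
  · -- (d3)
    intro m hm δ
    rcases Nat.lt_succ_iff_lt_or_eq.1 hm with hlt | rfl
    · rw [Function.update_of_ne (Nat.ne_of_lt hlt), hwlow m hlt]
      exact h4 m hlt δ
    · rw [Function.update_self]
      exact hD'sub δ hxmD'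
  · -- (d1)
    intro m hm δ δ' hne
    rcases Nat.lt_succ_iff_lt_or_eq.1 hm with hlt | rfl
    · rw [Function.update_of_ne (Nat.ne_of_lt hlt), hwlow m hlt, hwlow m hlt]
      exact h5 m hlt δ δ' hne
    · rw [Function.update_self]
      exact hC'pt xm hxmC' δ δ' hne
  · -- (d2)
    intro m' m hm'm hm δ δ'
    rcases Nat.lt_succ_iff_lt_or_eq.1 hm with hlt | rfl
    · rw [Function.update_of_ne (Nat.ne_of_lt hlt),
        Function.update_of_ne (Nat.ne_of_lt (lt_trans hm'm hlt)),
        hwlow m hlt, hwlow m' (lt_trans hm'm hlt)]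
      exact h6 m' m hm'm hlt δ δ'
    · rw [Function.update_self, Function.update_of_ne (Nat.ne_of_lt hm'm),
        hwlow m' hm'm]
      intro heq
      exact hxmg' δ (heq ▸ hOldmem m' hm'm δ')

end Step
section Glue

variable {X : Type*} {G : Subgroup (Equiv.Perm X)}

lemma stepinv_congr {p : Ultrafilter X} {A : Set X} {n : ℕ}
    {v v' : ℕ → Equiv.Perm X} {x x' : ℕ → X}
    (hv : ∀ i, i < n → v i = v' i) (hx : ∀ m, m < n → x m = x' m)
    (h : StepInv G p A n v x) : StepInv G p A n v' x' := by
  obtain ⟨h1, h2, h3, h4, h5, h6⟩ := h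
  have hwn : ∀ δ : ℕ → Bool, wrd v δ 0 n = wrd v' δ 0 n :=
    fun δ => wrd_congr_v fun i _ hi => hv i hi
  have hwm : ∀ m, m < n → ∀ δ : ℕ → Bool, wrd v δ 0 (m+1) = wrd v' δ 0 (m+1) :=
    fun m hm δ => wrd_congr_v fun i _ hi => hv i (Nat.lt_of_lt_of_le hi (Nat.succ_le_of_lt hm))
  refine ⟨fun i hi => hv i hi ▸ h1 i hi, ?_, ?_, ?_, ?_, ?_⟩
  · intro δ δ' hne
    rw [← hwn δ, ← hwn δ']
    exact h2 δ δ' hne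
  · intro δ
    rw [← hwn δ]
    exact h3 δ
  · intro m hm δ
    rw [← hwm m hm δ, ← hx m hm]
    exact h4 m hm δ
  · intro m hm δ δ' hne
    rw [← hwm m hm δ, ← hwm m hm δ', ← hx m hm]
    exact h5 m hm δ δ' hne
  · intro m' m hm'm hm δ δ'
    rw [← hwm m hm δ, ← hwm m' (lt_trans hm'm hm) δ', ← hx m hm, ← hx m' (lt_trans hm'm hm)]
    exact h6 m' m hm'm hm δ δ'

lemma seq_exists [Infinite X] {p : Ultrafilter X} {A : Set X} (hp : IsFree p) (hA : A ∈ p)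
    (H : ∀ B ∈ p, (compan G p B).Infinite) :
    ∃ (v : ℕ → Equiv.Perm X) (x : ℕ → X), ∀ n, StepInv G p A n v x := by
  classical
  have hX : Nonempty X := inferInstance
  obtain ⟨x0⟩ := hX
  have h0 : StepInv G p A 0 (fun _ => 1) (fun _ => x0) := by
    refine ⟨fun i hi => absurd hi (Nat.not_lt_zero i), ?_, ?_, ?_, ?_, ?_⟩
    · rintro δ δ' ⟨i, hi, -⟩
      exact absurd hi (Nat.not_lt_zero i)
    · intro δ
      have : wrd (fun _ => (1 : Equiv.Perm X)) δ 0 0 = 1 := rfl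
      rw [this]
      simpa using hA
    · intro m hm
      exact absurd hm (Nat.not_lt_zero m)
    · intro m hm
      exact absurd hm (Nat.not_lt_zero m)
    · intro m' m _ hm
      exact absurd hm (Nat.not_lt_zero m)
  choose gf xf hstep using fun (n : ℕ) (v : ℕ → Equiv.Perm X) (x : ℕ → X)
    (h : StepInv G p A n v x) => step_exists hp H n v x h
  -- build the tower
  let tw : (n : ℕ) → {vx : (ℕ → Equiv.Perm X) × (ℕ → X) // StepInv G p A n vx.1 vx.2} :=
    fun n => Nat.rec
      (motive := fun n => {vx : (ℕ → Equiv.Perm X) × (ℕ → X) // StepInv G p A n vx.1 vx.2})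
      ⟨((fun _ => 1), (fun _ => x0)), h0⟩
      (fun k ih => ⟨(Function.update ih.1.1 k (gf k ih.1.1 ih.1.2 ih.2),
        Function.update ih.1.2 k (xf k ih.1.1 ih.1.2 ih.2)), hstep k ih.1.1 ih.1.2 ih.2⟩) n
  have htw : ∀ n, tw (n+1) = ⟨(Function.update (tw n).1.1 n (gf n (tw n).1.1 (tw n).1.2 (tw n).2),
      Function.update (tw n).1.2 n (xf n (tw n).1.1 (tw n).1.2 (tw n).2)),
      hstep n (tw n).1.1 (tw n).1.2 (tw n).2⟩ := fun n => rfl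
  set v : ℕ → Equiv.Perm X := fun n => (tw (n+1)).1.1 n with hv
  set x : ℕ → X := fun n => (tw (n+1)).1.2 n with hx
  have hstab : ∀ n i, i < n → (tw n).1.1 i = v i ∧ (tw n).1.2 i = x i := by
    intro n
    induction n with
    | zero => intro i hi; exact absurd hi (Nat.not_lt_zero i)
    | succ k ih =>
        intro i hi
        rcases Nat.lt_succ_iff_lt_or_eq.1 hi with hlt | rfl
        · exact ⟨(Function.update_of_ne (Nat.ne_of_lt hlt) _ _).trans (ih i hlt).1,
            (Function.update_of_ne (Nat.ne_of_lt hlt) _ _).trans (ih i hlt).2⟩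
        · exact ⟨rfl, rfl⟩
  refine ⟨v, x, fun n => ?_⟩
  exact stepinv_congr (fun i hi => (hstab n i hi).1) (fun m hm => (hstab n m hm).2) (tw n).2

end Glue
section Bad

variable {X : Type*} {G : Subgroup (Equiv.Perm X)}

lemma exists_bad_subset [Infinite X] {p : Ultrafilter X} {A : Set X} (hp : IsFree p)
    (hA : A ∈ p) (H : ∀ B ∈ p, (compan G p B).Infinite) :
    ∃ Y, Y ⊆ A ∧ Y.Infinite ∧
      ∀ u : Ultrafilter X, IsFree u → Y ∈ u → (compan G u Y).Infinite := by
  classical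
  obtain ⟨v, x, hInv⟩ := seq_exists hp hA H
  have P1 : ∀ i, v i ∈ G := fun i => (hInv (i+1)).1 i (Nat.lt_succ_self i)
  have P4 : ∀ m (δ : ℕ → Bool), wrd v δ 0 (m+1) (x m) ∈ A :=
    fun m δ => (hInv (m+1)).2.2.2.1 m (Nat.lt_succ_self m) δ
  have P5 : ∀ m (δ δ' : ℕ → Bool), (∃ i, i < m+1 ∧ δ i ≠ δ' i) →
      wrd v δ 0 (m+1) (x m) ≠ wrd v δ' 0 (m+1) (x m) :=
    fun m => (hInv (m+1)).2.2.2.2.1 m (Nat.lt_succ_self m)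
  have P6 : ∀ m' m, m' < m → ∀ (δ δ' : ℕ → Bool),
      wrd v δ 0 (m+1) (x m) ≠ wrd v δ' 0 (m'+1) (x m') :=
    fun m' m h => (hInv (m+1)).2.2.2.2.2 m' m h (Nat.lt_succ_self m)
  set Y : Set X := {y | ∃ m, ∃ δ : ℕ → Bool, y = wrd v δ 0 (m+1) (x m)} with hYdef
  have hYA : Y ⊆ A := by
    rintro y ⟨m, δ, rfl⟩
    exact P4 m δ
  have hYinf : Y.Infinite := by
    apply Set.infinite_of_injective_forall_mem
      (f := fun m : ℕ => wrd v (fun _ => false) 0 (m+1) (x m))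
    · intro m m' heq
      by_contra hnem
      rcases lt_or_gt_of_ne hnem with h | h
      · exact P6 m m' h _ _ heq.symm
      · exact P6 m' m h _ _ heq
    · intro m
      exact ⟨m, fun _ => false, rfl⟩
  set md : X → ℕ × (ℕ → Bool) := fun y =>
    if h : (∃ m, ∃ δ : ℕ → Bool, y = wrd v δ 0 (m+1) (x m)) then
      (h.choose, h.choose_spec.choose) else (0, fun _ => false) with hmd
  set idx : X → ℕ := fun y => (md y).1 with hidx
  set bts : X → ℕ → Bool := fun y => (md y).2 with hbts
  have hspec : ∀ y, y ∈ Y → y = wrd v (bts y) 0 (idx y + 1) (x (idx y)) := by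
    intro y hy
    have h : ∃ m, ∃ δ : ℕ → Bool, y = wrd v δ 0 (m+1) (x m) := hy
    have hmdy : md y = (h.choose, h.choose_spec.choose) := dif_pos h
    show y = wrd v (md y).2 0 ((md y).1 + 1) (x (md y).1)
    rw [hmdy]
    exact h.choose_spec.choose_spec
  have huniq : ∀ y m (δ : ℕ → Bool), y = wrd v δ 0 (m+1) (x m) →
      idx y = m ∧ ∀ i, i < m + 1 → bts y i = δ i := by
    intro y m δ hy
    have hyY : y ∈ Y := ⟨m, δ, hy⟩
    have h0 := hspec y hyY
    have him : idx y = m := by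
      by_contra hnem
      rcases lt_or_gt_of_ne hnem with h | h
      · exact P6 (idx y) m h δ (bts y) (h0.symm.trans hy).symm
      · exact P6 m (idx y) h (bts y) δ (h0.symm.trans hy)
    rw [him] at h0
    refine ⟨him, fun i hi => ?_⟩
    by_contra hnei
    exact P5 m (bts y) δ ⟨i, hi, hnei⟩ (h0.symm.trans hy)
  refine ⟨Y, hYA, hYinf, ?_⟩
  intro u hu hYu
  have hYgeq : ∀ k, {y | y ∈ Y ∧ k ≤ idx y} ∈ u := by
    intro k
    have hsm : {y | y ∈ Y ∧ idx y < k}.Finite := by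
      apply Set.Finite.subset (Set.Finite.biUnion (Finset.range k).finite_toSet
        (fun m _ => Set.finite_range
          (fun d : Fin (m+1) → Bool => wrd v (extB (m+1) d) 0 (m+1) (x m))))
      rintro y ⟨hyY, hyk⟩
      refine Set.mem_biUnion (Finset.mem_range.2 hyk) ?_
      refine ⟨fun j : Fin (idx y + 1) => bts y j.1, ?_⟩
      show wrd v (extB (idx y + 1) fun j => bts y j.1) 0 (idx y + 1) (x (idx y)) = y
      rw [← wrd_extB]
      exact (hspec y hyY).symm
    have h1 : {y | y ∈ Y ∧ idx y < k}ᶜ ∈ u :=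
      hu (by rw [Filter.mem_cofinite, compl_compl]; exact hsm)
    refine Filter.mem_of_superset (Filter.inter_mem hYu h1) ?_
    rintro y ⟨hyY, hyc⟩
    refine ⟨hyY, ?_⟩
    by_contra hk
    exact hyc ⟨hyY, Nat.lt_of_not_le hk⟩
  set b : ℕ → Bool := fun k =>
    if {y | (y ∈ Y ∧ k ≤ idx y) ∧ bts y k = true} ∈ u then true else false with hbdef
  have hb : ∀ k, {y | (y ∈ Y ∧ k ≤ idx y) ∧ bts y k = b k} ∈ u := by
    intro k
    by_cases h : {y | (y ∈ Y ∧ k ≤ idx y) ∧ bts y k = true} ∈ u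
    · have hbk : b k = true := if_pos h
      rw [hbk]
      exact h
    · have hbk : b k = false := if_neg h
      rw [hbk]
      have h1 : {y | (y ∈ Y ∧ k ≤ idx y) ∧ bts y k = true}ᶜ ∈ u :=
        Ultrafilter.compl_mem_iff_notMem.2 h
      refine Filter.mem_of_superset (Filter.inter_mem (hYgeq k) h1) ?_
      rintro y ⟨hy1, hy2⟩
      refine ⟨hy1, ?_⟩
      by_contra hbf
      have : bts y k = true := by revert hbf; cases bts y k <;> simp
      exact hy2 ⟨hy1, this⟩
  have hPk : ∀ k, {y | (y ∈ Y ∧ k ≤ idx y) ∧ ∀ i, i ≤ k → bts y i = b i} ∈ u := by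
    intro k
    have h1 : (⋂ i ∈ Finset.range (k+1), {y | (y ∈ Y ∧ i ≤ idx y) ∧ bts y i = b i}) ∈ u :=
      (Filter.biInter_finset_mem _).2 fun i _ => hb i
    refine Filter.mem_of_superset (Filter.inter_mem (hYgeq k) h1) ?_
    rintro y ⟨hy1, hy2⟩
    rw [Set.mem_iInter₂] at hy2
    exact ⟨hy1, fun i hik => (hy2 i (Finset.mem_range.2 (Nat.lt_succ_of_le hik))).2⟩
  set W : ℕ → Equiv.Perm X := fun k => wrd v b 0 k with hW
  set hk : ℕ → Equiv.Perm X := fun k => W k * (if b k then (v k)⁻¹ else v k) * (W k)⁻¹ with hhk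
  have hkG : ∀ k, hk k ∈ G := by
    intro k
    refine mul_mem (mul_mem (wrd_mem fun i _ _ => P1 i) ?_) (inv_mem (wrd_mem fun i _ _ => P1 i))
    by_cases h : b k
    · rw [if_pos h]; exact inv_mem (P1 k)
    · rw [if_neg h]; exact P1 k
  have hperm : ∀ k m (d : ℕ → Bool), k ≤ m → (∀ i, i ≤ k → d i = b i) →
      hk k * wrd v d 0 (m+1) = wrd v (Function.update d k (!b k)) 0 (m+1) := by
    intro k m d hkm hd
    have e0 : wrd v d 0 k = W k := wrd_congr fun i _ hi => hd i (le_of_lt hi)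
    have e1 : wrd v (Function.update d k (!b k)) 0 k = W k := by
      refine wrd_congr fun i _ hi => ?_
      rw [Function.update_of_ne (Nat.ne_of_lt hi)]
      exact hd i (le_of_lt hi)
    have e2 : wrd v (Function.update d k (!b k)) (k+1) (m+1) = wrd v d (k+1) (m+1) :=
      wrd_congr fun i hik _ => Function.update_of_ne (Nat.ne_of_gt (Nat.lt_of_succ_le hik)) _ _
    have hs1 : wrd v d 0 (m+1) = W k * ((if d k then v k else 1) * wrd v d (k+1) (m+1)) := by
      rw [wrd_split (Nat.le_succ_of_le hkm), wrd_head (Nat.lt_succ_of_le hkm), e0]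
    have hs2 : wrd v (Function.update d k (!b k)) 0 (m+1) =
        W k * ((if (!b k) then v k else 1) * wrd v d (k+1) (m+1)) := by
      rw [wrd_split (Nat.le_succ_of_le hkm), wrd_head (Nat.lt_succ_of_le hkm), e1, e2,
        Function.update_self]
    have hdk : d k = b k := hd k le_rfl
    rw [hs1, hs2]
    simp only [hhk, hdk]
    by_cases hbk : b k
    · simp [hbk, mul_assoc]
    · rw [Bool.not_eq_true] at hbk
      simp [hbk, mul_assoc]
  have hkey : ∀ k y, ((y ∈ Y ∧ k ≤ idx y) ∧ ∀ i, i ≤ k → bts y i = b i) →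
      (hk k) y ∈ Y ∧ idx ((hk k) y) = idx y ∧ bts ((hk k) y) k = !b k ∧
        (∀ i, i ≤ idx y → i ≠ k → bts ((hk k) y) i = bts y i) := by
    rintro k y ⟨⟨hyY, hky⟩, hbits⟩
    have h0 := hspec y hyY
    have heq : (hk k) y = wrd v (Function.update (bts y) k (!b k)) 0 (idx y + 1) (x (idx y)) := by
      conv_lhs => rw [h0]
      rw [← Equiv.Perm.mul_apply, hperm k (idx y) (bts y) hky hbits]
    have hyY' : (hk k) y ∈ Y := ⟨idx y, _, heq⟩
    obtain ⟨him, hib⟩ := huniq _ (idx y) (Function.update (bts y) k (!b k)) heq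
    refine ⟨hyY', him, ?_, ?_⟩
    · rw [hib k (Nat.lt_succ_of_le hky), Function.update_self]
    · intro i hi hik
      rw [hib i (Nat.lt_succ_of_le hi), Function.update_of_ne hik]
  set uk : ℕ → Ultrafilter X := fun k => Ultrafilter.map (⇑(hk k)) u with hukdef
  have hukY : ∀ k, {z | z ∈ Y ∧ k ≤ idx z ∧ bts z k = !b k} ∈ uk k := by
    intro k
    refine mem_pmap.2 (Filter.mem_of_superset (hPk k) ?_)
    intro y hy
    obtain ⟨h1, h2, h3, _⟩ := hkey k y hy
    exact ⟨h1, h2 ▸ hy.1.2, h3⟩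
  have hukY2 : ∀ j k, j < k → {z | z ∈ Y ∧ bts z k = b k} ∈ uk j := by
    intro j k hjk
    refine mem_pmap.2 (Filter.mem_of_superset (hPk k) ?_)
    intro y hy
    have hyPj : (y ∈ Y ∧ j ≤ idx y) ∧ ∀ i, i ≤ j → bts y i = b i :=
      ⟨⟨hy.1.1, le_trans (le_of_lt hjk) hy.1.2⟩,
        fun i hij => hy.2 i (le_trans hij (le_of_lt hjk))⟩
    obtain ⟨h1, _, _, h4⟩ := hkey j y hyPj
    refine ⟨h1, ?_⟩
    rw [h4 k hy.1.2 (Nat.ne_of_gt hjk), hy.2 k le_rfl]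
  have hukmem : ∀ k, uk k ∈ compan G u Y := by
    intro k
    constructor
    · refine mem_pmap.2 (Filter.mem_of_superset (hPk k) ?_)
      intro y hy
      exact (hkey k y hy).1
    · exact ⟨hk k, hkG k, rfl⟩
  have hne : ∀ j k, j < k → uk j ≠ uk k := by
    intro j k hjk heq
    have h1 := hukY k
    have h2 := hukY2 j k hjk
    rw [heq] at h2
    obtain ⟨z, hz⟩ := Ultrafilter.nonempty_of_mem (Filter.inter_mem h1 h2)
    have hzz := hz.1.2.2
    rw [hz.2.2] at hzz
    simp at hzz
  refine Set.infinite_of_injective_forall_mem (f := uk) ?_ hukmem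
  intro j k hjk
  by_contra hne'
  rcases lt_or_gt_of_ne hne' with h | h
  · exact hne j k h hjk
  · exact hne k j h hjk.symm

end Bad
section Final

variable {X : Type*} {G : Subgroup (Equiv.Perm X)}

lemma forall_compan_infinite {p : Ultrafilter X}
    (hno : ¬ ∃ S ∈ p, ∀ r ∈ ufOrbit G p, S ∈ r → r = p) :
    ∀ B ∈ p, (compan G p B).Infinite := by
  classical
  intro B hB
  intro hfin
  apply hno
  set Cr : Ultrafilter X → Set X := fun r =>
    if h : p = r then Set.univ else (exists_sep h).choose with hCr
  have hCrp : ∀ r, Cr r ∈ p := by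
    intro r
    by_cases h : p = r
    · show (if h : p = r then Set.univ else (exists_sep h).choose) ∈ p
      rw [dif_pos h]
      exact Filter.univ_mem
    · show (if h : p = r then Set.univ else (exists_sep h).choose) ∈ p
      rw [dif_neg h]
      exact (exists_sep h).choose_spec.1
  have hCrr : ∀ r, p ≠ r → (Cr r)ᶜ ∈ r := by
    intro r h
    have : Cr r = (exists_sep h).choose := dif_neg h
    rw [this]
    exact (exists_sep h).choose_spec.2
  refine ⟨B ∩ ⋂ r ∈ hfin.toFinset, Cr r,
    Filter.inter_mem hB ((Filter.biInter_finset_mem _).2 fun r _ => hCrp r), ?_⟩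
  intro r hr hSr
  by_contra hrp
  have hrK : r ∈ hfin.toFinset :=
    hfin.mem_toFinset.2 ⟨Filter.mem_of_superset hSr Set.inter_subset_left, hr⟩
  have h1 : Cr r ∈ r := Filter.mem_of_superset hSr
    (le_trans Set.inter_subset_right (Set.biInter_subset_of_mem hrK))
  have h2 : (Cr r)ᶜ ∈ r := hCrr r (fun h => hrp h.symm)
  exact (Ultrafilter.compl_notMem_iff.2 h1) h2

end Final

/-- A subset `A` of `X_G` is scattered iff the orbit `Gp` is discrete
(in the subspace topology of `X*`) for every free ultrafilter `p` containing `A`. -/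
theorem scattered_iff_orbits_discrete {X : Type*} [Infinite X]
    (G : Subgroup (Equiv.Perm X)) (A : Set X) :
    IsScattered G A ↔ ∀ p : Ultrafilter X, IsFree p → A ∈ p →
      DiscreteTopology ↥(freeOrbit G p) := by
  constructor
  · intro hsc p hpf hAp
    rw [discrete_iff_isolating p hpf]
    by_contra hno
    have H := forall_compan_infinite (G := G) hno
    obtain ⟨Y, hYA, hYinf, hbad⟩ := exists_bad_subset hpf hAp H
    obtain ⟨q, hqf, hqY, hqfin⟩ := hsc Y hYA hYinf
    exact (hbad q hqf hqY) hqfin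
  · intro hd
    apply scattered_of_isolating
    intro p hpf hAp
    exact (discrete_iff_isolating p hpf).1 (hd p hpf hAp)
end
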